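/- For all integers b > a > 1, the difference (ab)!·(1/(b!·(a!)^b) − 1/(a!·(b!)^a)) is a nonnegative integer; equivalently, the number of partitions of an (ab)-set into b blocks of size a is at least the number of partitions into a blocks of size b. -/

import Mathlib

lemma fact_le_pow_pred : ∀ n : ℕ, (n + 1).factorial ≤ (n + 1) ^ n
  | 0 => le_refl 1
  | n + 1 => by
    calc (n + 2).factorial = (n + 2) * (n + 1).factorial := rfl
      _ ≤ (n + 2) * (n + 1) ^ n := Nat.mul_le_mul_left _ (fact_le_pow_pred n)
      _ ≤ (n + 2) * (n + 2) ^ n :=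
        Nat.mul_le_mul_left _ (Nat.pow_le_pow_left (by omega) n)
      _ = (n + 2) ^ (n + 1) := (pow_succ' _ _).symm

lemma key_fact_ineq (a b : ℕ) (ha : 1 ≤ a) (hab : a ≤ b) :
    a.factorial ^ (b - 1) ≤ b.factorial ^ (a - 1) := by
  obtain ⟨c, rfl⟩ := Nat.exists_eq_add_of_le hab
  obtain ⟨m, rfl⟩ := Nat.exists_eq_add_of_le ha
  have h1 : (1 + m).factorial ≤ (1 + m + 1) ^ (1 + m - 1) := by
    refine le_trans ?_ (Nat.pow_le_pow_left (Nat.le_succ _) _)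
    simpa [Nat.add_comm 1 m] using fact_le_pow_pred m
  calc (1 + m).factorial ^ (1 + m + c - 1)
      = (1 + m).factorial ^ (1 + m - 1) * (1 + m).factorial ^ c := by
        rw [← pow_add]; congr 1; omega
    _ ≤ (1 + m).factorial ^ (1 + m - 1) * ((1 + m + 1) ^ (1 + m - 1)) ^ c :=
        Nat.mul_le_mul_left _ (Nat.pow_le_pow_left h1 c)
    _ = ((1 + m).factorial * (1 + m + 1) ^ c) ^ (1 + m - 1) := by
        rw [mul_pow, ← pow_mul, mul_comm (1 + m - 1) c, pow_mul]
    _ ≤ (1 + m + c).factorial ^ (1 + m - 1) :=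
        Nat.pow_le_pow_left Nat.factorial_mul_pow_le_factorial _

/-- For integers `b > a > 1`, the difference
`(ab)!·(1/(b!·(a!)^b) − 1/(a!·(b!)^a))` is a nonnegative integer; equivalently, the
number of partitions of an `(ab)`-set into `b` blocks of size `a`, namely
`(ab)!/(b!·(a!)^b)`, is at least the number `(ab)!/(a!·(b!)^a)` of partitions into
`a` blocks of size `b`. -/
theorem dim_difference_nonneg_integer (a b : ℕ) (ha : 1 < a) (hab : a < b) :
    (∃ k : ℕ,
      ((a * b).factorial : ℚ) *
          (1 / ((b.factorial : ℚ) * (a.factorial : ℚ) ^ b) -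
            1 / ((a.factorial : ℚ) * (b.factorial : ℚ) ^ a)) = (k : ℚ)) ∧
    ((a * b).factorial : ℚ) / ((a.factorial : ℚ) * (b.factorial : ℚ) ^ a) ≤
      ((a * b).factorial : ℚ) / ((b.factorial : ℚ) * (a.factorial : ℚ) ^ b) := by
  have ha0 : a ≠ 0 := by omega
  have hb0 : b ≠ 0 := by omega
  set A := Nat.uniformBell b a with hAdef
  set B := Nat.uniformBell a b with hBdef
  have hA : A * a.factorial ^ b * b.factorial = (a * b).factorial := by
    rw [hAdef, Nat.uniformBell_mul_eq b ha0, mul_comm b a]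
  have hB : B * b.factorial ^ a * a.factorial = (a * b).factorial := by
    rw [hBdef, Nat.uniformBell_mul_eq a hb0]
  -- the key inequality on denominators
  have hden : a.factorial ^ b * b.factorial ≤ b.factorial ^ a * a.factorial := by
    have h := key_fact_ineq a b (by omega) (le_of_lt hab)
    calc a.factorial ^ b * b.factorial
        = a.factorial ^ (b - 1) * (a.factorial * b.factorial) := by
          rw [← mul_assoc]; congr 1
          rw [mul_comm, ← pow_succ']; congr 1; omega
      _ ≤ b.factorial ^ (a - 1) * (a.factorial * b.factorial) :=
          Nat.mul_le_mul_right _ h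
      _ = b.factorial ^ a * a.factorial := by
          rw [← mul_assoc, mul_comm (b.factorial ^ (a-1)) a.factorial,
            mul_assoc, mul_comm (b.factorial ^ (a-1)) b.factorial, ← pow_succ']
          rw [mul_comm]; congr 2; omega
  have hBA : B ≤ A := by
    have hpos : 0 < b.factorial ^ a * a.factorial :=
      Nat.mul_pos (pow_pos b.factorial_pos _) a.factorial_pos
    refine Nat.le_of_mul_le_mul_right ?_ hpos
    calc B * (b.factorial ^ a * a.factorial) = (a*b).factorial := by
          rw [← hB, mul_assoc]
      _ = A * (a.factorial ^ b * b.factorial) := by rw [← hA, mul_assoc]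
      _ ≤ A * (b.factorial ^ a * a.factorial) := Nat.mul_le_mul_left _ hden
  -- rational facts
  have haf : (a.factorial : ℚ) ≠ 0 := Nat.cast_ne_zero.2 a.factorial_pos.ne'
  have hbf : (b.factorial : ℚ) ≠ 0 := Nat.cast_ne_zero.2 b.factorial_pos.ne'
  have hX : ((b.factorial : ℚ) * (a.factorial : ℚ) ^ b) ≠ 0 :=
    mul_ne_zero hbf (pow_ne_zero _ haf)
  have hY : ((a.factorial : ℚ) * (b.factorial : ℚ) ^ a) ≠ 0 :=
    mul_ne_zero haf (pow_ne_zero _ hbf)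
  have hAQ : ((a * b).factorial : ℚ) = A * ((b.factorial : ℚ) * (a.factorial : ℚ) ^ b) := by
    have := congrArg (Nat.cast : ℕ → ℚ) hA
    push_cast at this ⊢
    linarith [this]
  have hBQ : ((a * b).factorial : ℚ) = B * ((a.factorial : ℚ) * (b.factorial : ℚ) ^ a) := by
    have := congrArg (Nat.cast : ℕ → ℚ) hB
    push_cast at this ⊢
    linarith [this]
  have hdivA : ((a * b).factorial : ℚ) / ((b.factorial : ℚ) * (a.factorial : ℚ) ^ b) = A := by
    rw [hAQ, mul_div_assoc, div_self hX, mul_one]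
  have hdivB : ((a * b).factorial : ℚ) / ((a.factorial : ℚ) * (b.factorial : ℚ) ^ a) = B := by
    rw [hBQ, mul_div_assoc, div_self hY, mul_one]
  constructor
  · refine ⟨A - B, ?_⟩
    rw [mul_sub, mul_one_div, mul_one_div, hdivA, hdivB, Nat.cast_sub hBA]
  · rw [hdivA, hdivB]
    exact_mod_cast hBA
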